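/- For all nA, nB ≥ 1 and m ≥ 2, the set C_max(nA,nB,m), regarded as a subset of the real vector space of families Fin nA → Fin nB → Fin m → Fin m → ℝ, is not convex. -/

import Mathlib

open scoped BigOperators

/-- A correlation with `nA` questions for Alice, `nB` questions for Bob and `m` outcomes. -/
def IsCorrelation {nA nB m : ℕ} (p : Fin nA → Fin nB → Fin m → Fin m → ℝ) : Prop :=
  (∀ x y i j, 0 ≤ p x y i j) ∧ ∀ x y, (∑ i, ∑ j, p x y i j) = 1

/-- A projection-valued measure with `m` outcomes on `ℂ^d`. -/
def IsPVM {d m : ℕ} (E : Fin m → Matrix (Fin d) (Fin d) ℂ) : Prop :=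
  (∀ i, (E i).IsHermitian) ∧ (∀ i, E i * E i = E i) ∧ (∑ i, E i = 1)

/-- The set `C_{max,d}(nA,nB,m)` of maximally entangled correlations in dimension `d`. -/
def CmaxD (nA nB m d : ℕ) : Set (Fin nA → Fin nB → Fin m → Fin m → ℝ) :=
  {p | IsCorrelation p ∧
    ∃ (E : Fin nA → Fin m → Matrix (Fin d) (Fin d) ℂ)
      (F : Fin nB → Fin m → Matrix (Fin d) (Fin d) ℂ),
      (∀ x, IsPVM (E x)) ∧ (∀ y, IsPVM (F y)) ∧
      ∀ x y i j, (p x y i j : ℂ) = (1 / (d : ℂ)) * (E x i * F y j).trace}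

/-- The set `C_max(nA,nB,m)` of maximally entangled correlations. -/
def Cmax (nA nB m : ℕ) : Set (Fin nA → Fin nB → Fin m → Fin m → ℝ) :=
  ⋃ (d : ℕ) (_ : 1 ≤ d), CmaxD nA nB m d

/-- A correlation with the same questions for Alice and Bob is synchronous if
`p x x i j = 0` whenever `i ≠ j`. -/
def Synchronous {n m : ℕ} (p : Fin n → Fin n → Fin m → Fin m → ℝ) : Prop :=
  ∀ x i j, i ≠ j → p x x i j = 0

/-- The set `C_max^s(n,m)` of synchronous maximally entangled correlations. -/
def CmaxSync (n m : ℕ) : Set (Fin n → Fin n → Fin m → Fin m → ℝ) :=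
  {p ∈ Cmax n n m | Synchronous p}

open Matrix in
private lemma eq_zero_of_trace_conjTranspose_mul_self {d : ℕ}
    {A : Matrix (Fin d) (Fin d) ℂ} (h : (Aᴴ * A).trace = 0) : A = 0 := by
  have key : (Aᴴ * A).trace = ((∑ i, ∑ k, Complex.normSq (A k i) : ℝ) : ℂ) := by
    simp only [Matrix.trace, Matrix.diag, Matrix.mul_apply, Matrix.conjTranspose_apply]
    push_cast
    refine Finset.sum_congr rfl fun i _ => Finset.sum_congr rfl fun k _ => ?_
    rw [Complex.normSq_eq_conj_mul_self]
    rfl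
  rw [key] at h
  have h2 : (∑ i, ∑ k, Complex.normSq (A k i) : ℝ) = 0 := by exact_mod_cast h
  ext k i
  have := (Finset.sum_eq_zero_iff_of_nonneg (fun i _ =>
    Finset.sum_nonneg fun k _ => Complex.normSq_nonneg (A k i))).mp h2 i (Finset.mem_univ i)
  have := (Finset.sum_eq_zero_iff_of_nonneg (fun k _ =>
    Complex.normSq_nonneg (A k i))).mp this k (Finset.mem_univ k)
  simpa using Complex.normSq_eq_zero.mp this

open Matrix in
private lemma proj_mul_eq_zero_of_trace_eq_zero {d : ℕ}
    {P Q : Matrix (Fin d) (Fin d) ℂ} (hP : P.IsHermitian) (hQ : Q.IsHermitian)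
    (hP2 : P * P = P) (hQ2 : Q * Q = Q) (h : (P * Q).trace = 0) : P * Q = 0 := by
  apply eq_zero_of_trace_conjTranspose_mul_self
  have : (P * Q)ᴴ * (P * Q) = Q * (P * Q) := by
    rw [Matrix.conjTranspose_mul, hP.eq, hQ.eq, mul_assoc, ← mul_assoc P P Q, hP2]
  rw [this, Matrix.trace_mul_comm, mul_assoc, hQ2, h]

open Matrix in
private lemma trace_proj_nat {d : ℕ} {P : Matrix (Fin d) (Fin d) ℂ}
    (hH : P.IsHermitian) (hP2 : P * P = P) : ∃ r : ℕ, P.trace = (r : ℂ) := by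
  classical
  set V : Matrix (Fin d) (Fin d) ℂ := (hH.eigenvectorUnitary : Matrix (Fin d) (Fin d) ℂ)
  have hVV : star V * V = 1 := Matrix.mem_unitaryGroup_iff'.mp hH.eigenvectorUnitary.2
  have hVV' : V * star V = 1 := Matrix.mem_unitaryGroup_iff.mp hH.eigenvectorUnitary.2
  set D : Matrix (Fin d) (Fin d) ℂ := Matrix.diagonal (RCLike.ofReal ∘ hH.eigenvalues)
  have hspec : P = V * D * star V := hH.spectral_theorem
  have hDD : D * D = D := by
    have h1 : (V * D * star V) * (V * D * star V) = V * D * star V := by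
      rw [← hspec]; exact hP2
    have h2 : V * (D * D) * star V = V * D * star V := by
      calc V * (D * D) * star V = V * (D * ((star V * V) * D)) * star V := by rw [hVV, one_mul]
        _ = (V * D * star V) * (V * D * star V) := by noncomm_ring
        _ = V * D * star V := h1
    calc D * D = star V * (V * (D * D) * star V) * V := by
          rw [show star V * (V * (D * D) * star V) * V
              = (star V * V) * (D * D) * (star V * V) by noncomm_ring, hVV, one_mul, mul_one]
      _ = star V * (V * D * star V) * V := by rw [h2]
      _ = D := by
          rw [show star V * (V * D * star V) * V
              = (star V * V) * D * (star V * V) by noncomm_ring, hVV, one_mul, mul_one]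
  have hev : ∀ i, hH.eigenvalues i = 0 ∨ hH.eigenvalues i = 1 := by
    intro i
    have hDD' := hDD
    rw [Matrix.diagonal_mul_diagonal] at hDD'
    have h3 := congrFun (Matrix.diagonal_injective hDD') i
    simp only [Function.comp_apply] at h3
    have h4 : hH.eigenvalues i * hH.eigenvalues i = hH.eigenvalues i := by
      exact_mod_cast h3
    rcases eq_or_ne (hH.eigenvalues i) 0 with h | h
    · exact Or.inl h
    · exact Or.inr (mul_left_cancel₀ h (by rw [mul_one]; exact h4))
  refine ⟨(Finset.univ.filter fun i => hH.eigenvalues i = 1).card, ?_⟩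
  have htr : P.trace = D.trace := by
    rw [hspec, Matrix.trace_mul_comm, ← mul_assoc, hVV, one_mul]
  rw [htr]
  have : D.trace = ((∑ i, hH.eigenvalues i : ℝ) : ℂ) := by
    simp [D, Matrix.trace_diagonal]
  rw [this]
  have hsum : (∑ i, hH.eigenvalues i : ℝ)
      = ((Finset.univ.filter fun i => hH.eigenvalues i = 1).card : ℝ) := by
    rw [Finset.card_filter]
    push_cast
    refine Finset.sum_congr rfl fun i _ => ?_
    rcases hev i with h | h <;> simp [h]
  rw [hsum]
  norm_cast

/-- For `nA, nB ≥ 1` and `m ≥ 2` the set `C_max(nA,nB,m)` is not convex. -/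
theorem Cmax_not_convex {nA nB m : ℕ} (hA : 1 ≤ nA) (hB : 1 ≤ nB) (hm : 2 ≤ m) :
    ¬ Convex ℝ (Cmax nA nB m) := by
  classical
  intro hconv
  set i0 : Fin m := ⟨0, by omega⟩
  set i1 : Fin m := ⟨1, by omega⟩
  have hi01 : i0 ≠ i1 := by simp [i0, i1, Fin.ext_iff]
  set x0 : Fin nA := ⟨0, hA⟩
  set y0 : Fin nB := ⟨0, hB⟩
  -- the two deterministic correlations
  set p1 : Fin nA → Fin nB → Fin m → Fin m → ℝ :=
    fun _ _ i j => if i = i0 ∧ j = i0 then 1 else 0 with hp1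
  set p2 : Fin nA → Fin nB → Fin m → Fin m → ℝ :=
    fun _ _ i j => if i = i1 ∧ j = i1 then 1 else 0 with hp2
  have hmem : ∀ (k : Fin m), (fun (_ : Fin nA) (_ : Fin nB) (i j : Fin m) =>
      if i = k ∧ j = k then (1:ℝ) else 0) ∈ Cmax nA nB m := by
    intro k
    refine Set.mem_iUnion₂.mpr ⟨1, le_refl 1, ?_, ?_⟩
    · constructor
      · intro x y i j; dsimp only; split <;> norm_num
      · intro x y
        rw [Finset.sum_comm]
        rw [Finset.sum_eq_single k]
        · simp
        · intro j _ hj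
          apply Finset.sum_eq_zero
          intro i _
          simp [hj]
        · simp
    · refine ⟨fun _ i => if i = k then 1 else 0, fun _ j => if j = k then 1 else 0,
        ?_, ?_, ?_⟩
      · intro x
        refine ⟨fun i => ?_, fun i => ?_, ?_⟩
        · by_cases h : i = k <;>
            simp [h, Matrix.isHermitian_one, Matrix.isHermitian_zero]
        · by_cases h : i = k <;> simp [h]
        · simp [Finset.sum_ite_eq']
      · intro y
        refine ⟨fun i => ?_, fun i => ?_, ?_⟩
        · by_cases h : i = k <;>
            simp [h, Matrix.isHermitian_one, Matrix.isHermitian_zero]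
        · by_cases h : i = k <;> simp [h]
        · simp [Finset.sum_ite_eq']
      · intro x y i j
        by_cases hi : i = k <;> by_cases hj : j = k <;>
          simp [hi, hj, Matrix.trace_one]
  have h1 : p1 ∈ Cmax nA nB m := hmem i0
  have h2 : p2 ∈ Cmax nA nB m := hmem i1
  set l : ℝ := Real.sqrt 2 / 2 with hl
  have hsq := Real.sq_sqrt (show (0:ℝ) ≤ 2 by norm_num)
  have hnn := Real.sqrt_nonneg 2
  have hsqrt2 : (1:ℝ) < Real.sqrt 2 := by nlinarith
  have hsqrt2' : Real.sqrt 2 < 2 := by nlinarith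
  have hl0 : 0 ≤ l := by positivity
  have hl1 : 0 ≤ 1 - l := by rw [hl]; linarith
  have hq : l • p1 + (1 - l) • p2 ∈ Cmax nA nB m :=
    hconv h1 h2 hl0 hl1 (by ring)
  obtain ⟨d, hmem'⟩ := Set.mem_iUnion.mp hq
  obtain ⟨hd, hmemD⟩ := Set.mem_iUnion.mp hmem'
  obtain ⟨hcorr, E, F, hE, hF, htr⟩ := hmemD
  have hd0 : (d : ℂ) ≠ 0 := by
    simp only [ne_eq, Nat.cast_eq_zero]; omega
  -- value of the mixture
  have hqval : ∀ i j, ((l • p1 + (1 - l) • p2) x0 y0 i j : ℝ)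
      = (if i = i0 ∧ j = i0 then l else 0) + (if i = i1 ∧ j = i1 then 1 - l else 0) := by
    intro i j
    simp only [Pi.add_apply, Pi.smul_apply, smul_eq_mul, hp1, hp2]
    by_cases h : i = i0 ∧ j = i0 <;> by_cases h' : i = i1 ∧ j = i1 <;>
      simp [h, h']
  -- trace zero for off-support pairs
  have hzero : ∀ i j, ¬(i = i0 ∧ j = i0) → ¬(i = i1 ∧ j = i1) →
      E x0 i * F y0 j = 0 := by
    intro i j h h'
    apply proj_mul_eq_zero_of_trace_eq_zero ((hE x0).1 i) ((hF y0).1 j)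
      ((hE x0).2.1 i) ((hF y0).2.1 j)
    have := htr x0 y0 i j
    rw [hqval i j] at this
    simp only [h, h', if_false, if_neg, add_zero] at this
    have h0 : (0 : ℂ) = (1 / (d:ℂ)) * (E x0 i * F y0 j).trace := by
      simpa using this
    field_simp at h0
    exact h0.symm.trans (zero_mul _)
  -- E x0 i0 = E x0 i0 * F y0 i0
  have hEP : E x0 i0 = E x0 i0 * F y0 i0 := by
    have hsum : ∑ j, E x0 i0 * F y0 j = E x0 i0 * F y0 i0 :=
      Finset.sum_eq_single i0
        (fun j _ hj => hzero i0 j (fun h => hj h.2) (fun h => hi01 h.1))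
        (by simp)
    rw [← hsum, ← Finset.mul_sum, (hF y0).2.2, mul_one]
  have hFP : F y0 i0 = E x0 i0 * F y0 i0 := by
    have hsum : ∑ i, E x0 i * F y0 i0 = E x0 i0 * F y0 i0 :=
      Finset.sum_eq_single i0
        (fun i _ hi => hzero i i0 (fun h => hi h.1) (fun h => hi01 h.2))
        (by simp)
    rw [← hsum, ← Finset.sum_mul, (hE x0).2.2, one_mul]
  have hPF : F y0 i0 = E x0 i0 := by rw [hFP, ← hEP]
  -- l = trace(P)/d with trace(P) a natural number
  obtain ⟨r, hr⟩ := trace_proj_nat ((hE x0).1 i0) ((hE x0).2.1 i0)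
  have hlr : (l : ℂ) = (1 / (d:ℂ)) * (r : ℂ) := by
    have h := htr x0 y0 i0 i0
    rw [hqval i0 i0] at h
    have h'' : ((if i0 = i0 ∧ i0 = i0 then l else 0)
        + if i0 = i1 ∧ i0 = i1 then 1 - l else 0) = l := by
      rw [if_pos ⟨rfl, rfl⟩, if_neg (fun hh => hi01 hh.1), add_zero]
    rw [h'', ← hEP, hr] at h
    exact h
  have hlreal : l = (r : ℝ) / (d : ℝ) := by
    have : (l : ℂ) = ((r : ℝ) / (d : ℝ) : ℝ) := by
      rw [hlr]; push_cast; ring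
    exact_mod_cast this
  -- contradiction with irrationality of √2
  apply irrational_sqrt_two
  refine ⟨(2 * r / d : ℚ), ?_⟩
  have hdR : (d : ℝ) ≠ 0 := Nat.cast_ne_zero.mpr (by omega)
  have : Real.sqrt 2 = 2 * (r : ℝ) / (d : ℝ) := by
    have := hlreal
    rw [hl] at this
    field_simp at this ⊢
    linarith
  rw [this]
  push_cast
  ring
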